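/- arXiv:2007.12575 — 3 statements merged into one kernel-verified Lean document; each statement's English description precedes it below -/
import Mathlib

section
/- For every integer k ≥ 1, every complex d×d density matrix ρ and positive semidefinite σ with supp(ρ) ⊆ supp(σ), the quantity Q^{im}_{α_k}(ρ‖σ) equals the supremum of (Re tr(ρ·(V₁+V₁*)/2))^{α_k} over complex d×d matrices V₁,…,V_k and positive semidefinite Z satisfying tr(σZ) = 1, V₁+V₁* ≥ 0, Vᵢ*Vᵢ ≤ (Vᵢ₊₁+Vᵢ₊₁*)/2 for 1 ≤ i ≤ k−1, and V_k*V_k ≤ Z. -/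
open Matrix ComplexOrder

/-- `α_k = 1 + 1/(2^k - 1)`. -/
noncomputable def alphaIM (k : ℕ) : ℝ := 1 + 1 / (2 ^ k - 1)

/-- Feasibility of `(V₁, …, V_k, Z)` for the primal SDP defining the iterated mean
divergence: `Z ≥ 0`, `V₁ + V₁* ≥ 0`, `Vᵢ* Vᵢ ≤ (Vᵢ₊₁ + Vᵢ₊₁*)/2` for `1 ≤ i ≤ k-1`, and
`V_k* V_k ≤ Z`.  The matrices are indexed by `ℕ`, with only indices `1, …, k` relevant. -/
def QimFeasible {n : Type*} [Fintype n] (k : ℕ)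
    (V : ℕ → Matrix n n ℂ) (Z : Matrix n n ℂ) : Prop :=
  Z.PosSemidef ∧
  (V 1 + (V 1)ᴴ).PosSemidef ∧
  (∀ i : ℕ, 1 ≤ i → i < k →
    ((2 : ℂ)⁻¹ • (V (i + 1) + (V (i + 1))ᴴ) - (V i)ᴴ * V i).PosSemidef) ∧
  (Z - (V k)ᴴ * V k).PosSemidef

/-- The objective `α_k · Re tr(ρ (V₁+V₁*)/2) − (α_k − 1) · Re tr(σ Z)`. -/
noncomputable def QimObj {n : Type*} [Fintype n] (k : ℕ)
    (ρ σ : Matrix n n ℂ) (V : ℕ → Matrix n n ℂ) (Z : Matrix n n ℂ) : ℝ :=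
  alphaIM k * ((ρ * (V 1 + (V 1)ᴴ)).trace.re / 2) - (alphaIM k - 1) * (σ * Z).trace.re

/-- The iterated mean quantity `Q^{im}_{α_k}(ρ‖σ)`. -/
noncomputable def Qim {n : Type*} [Fintype n] (k : ℕ) (ρ σ : Matrix n n ℂ) : ℝ :=
  sSup {q : ℝ | ∃ V Z, QimFeasible k V Z ∧ q = QimObj k ρ σ V Z}

/-- The iterated mean divergence `D^{im}_{α_k}(ρ‖σ) = (1/(α_k−1)) log Q^{im}_{α_k}(ρ‖σ)`. -/
noncomputable def Dim {n : Type*} [Fintype n] (k : ℕ) (ρ σ : Matrix n n ℂ) : ℝ :=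
  (1 / (alphaIM k - 1)) * Real.log (Qim k ρ σ)

/-- Real powers of a Hermitian matrix, via the spectral decomposition (continuous
functional calculus); junk value `0` on non-Hermitian matrices. -/
noncomputable def mrpow {n : Type*} [Fintype n] [DecidableEq n]
    (A : Matrix n n ℂ) (r : ℝ) : Matrix n n ℂ :=
  if h : A.IsHermitian then
    (h.eigenvectorUnitary : Matrix n n ℂ) *
      Matrix.diagonal (fun i => ((h.eigenvalues i ^ r : ℝ) : ℂ)) *
      (h.eigenvectorUnitary : Matrix n n ℂ)ᴴ
  else 0

/-- Matrix geometric mean `A # B = A^{1/2} (A^{-1/2} B A^{-1/2})^{1/2} A^{1/2}`. -/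
noncomputable def geomMean {n : Type*} [Fintype n] [DecidableEq n]
    (A B : Matrix n n ℂ) : Matrix n n ℂ :=
  mrpow A (1/2) * mrpow (mrpow A (-(1/2)) * B * mrpow A (-(1/2))) (1/2) * mrpow A (1/2)

/-- Partial trace over the first tensor factor. -/
noncomputable def ptrFst {α β : Type*} [Fintype α] (M : Matrix (α × β) (α × β) ℂ) :
    Matrix β β ℂ :=
  Matrix.of fun b b' => ∑ a, M (a, b) (a, b')

/-- Iterated geometric mean: `iterGeom σ A k = A₁ # (A₂ # (⋯ # (A_k # σ)⋯))`. -/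
noncomputable def iterGeom {n : Type*} [Fintype n] [DecidableEq n]
    (σ : Matrix n n ℂ) : (ℕ → Matrix n n ℂ) → ℕ → Matrix n n ℂ
  | _, 0 => σ
  | A, (j + 1) => geomMean (A 1) (iterGeom σ (fun i => A (i + 1)) j)


section QimHelpers
set_option linter.unusedSectionVars false
set_option maxHeartbeats 1000000

variable {n : Type*} [Fintype n] [DecidableEq n]



lemma diag_re_nonneg {N : Matrix n n ℂ} (hN : N.PosSemidef) (i : n) : 0 ≤ (N i i).re := by
  have := hN.re_dotProduct_nonneg (Pi.single i 1)
  simpa [Matrix.mulVec_single, dotProduct, Pi.single_apply, Finset.sum_ite_eq] using this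

lemma trace_re_nonneg {N : Matrix n n ℂ} (hN : N.PosSemidef) : 0 ≤ N.trace.re := by
  rw [Matrix.trace, Complex.re_sum]
  exact Finset.sum_nonneg fun i _ => diag_re_nonneg hN i

lemma trace_mul_re_nonneg {ρ M : Matrix n n ℂ} (hρ : ρ.PosSemidef) (hM : M.PosSemidef) :
    0 ≤ (ρ * M).trace.re := by
  have hB : ∃ B : Matrix n n ℂ, M = star B * B := by
    open scoped MatrixOrder in exact CStarAlgebra.nonneg_iff_eq_star_mul_self.mp hM.nonneg
  obtain ⟨B, rfl⟩ := hB
  rw [Matrix.star_eq_conjTranspose]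
  rw [← Matrix.mul_assoc, Matrix.trace_mul_cycle]
  exact trace_re_nonneg (hρ.mul_mul_conjTranspose_same B)

lemma trace_mul_re_mono {ρ A B : Matrix n n ℂ} (hρ : ρ.PosSemidef)
    (h : (B - A).PosSemidef) : (ρ * A).trace.re ≤ (ρ * B).trace.re := by
  have := trace_mul_re_nonneg hρ h
  rw [Matrix.mul_sub, Matrix.trace_sub, Complex.sub_re] at this
  linarith

lemma re_trace_mul_conjTranspose {ρ V : Matrix n n ℂ} (hρ : ρ.IsHermitian) :
    (ρ * Vᴴ).trace.re = (ρ * V).trace.re := by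
  have h : ρ * Vᴴ = (V * ρ)ᴴ := by rw [Matrix.conjTranspose_mul, hρ.eq]
  rw [h, Matrix.trace_conjTranspose, Matrix.trace_mul_comm, Complex.star_def]
  exact Complex.conj_re _



lemma cs_step {ρ : Matrix n n ℂ} (hρ : ρ.PosSemidef) (hρtr : ρ.trace = 1)
    (V : Matrix n n ℂ) {ε : ℝ} (hε : 0 < ε) :
    (ρ * V).trace.re ≤ 1/(4*ε) + ε * (ρ * (Vᴴ * V)).trace.re := by
  set c : ℝ := 1/(2*ε) with hc
  have h0 : 0 ≤ (ρ * (((c:ℂ) • 1 - V)ᴴ * ((c:ℂ) • 1 - V))).trace.re :=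
    trace_mul_re_nonneg hρ (Matrix.posSemidef_conjTranspose_mul_self _)
  have hexp : ((c:ℂ) • 1 - V)ᴴ * ((c:ℂ) • 1 - V)
      = ((c:ℂ)*(c:ℂ)) • 1 - (c:ℂ) • V - (c:ℂ) • Vᴴ + Vᴴ * V := by
    rw [Matrix.conjTranspose_sub, Matrix.conjTranspose_smul, Matrix.conjTranspose_one]
    rw [Matrix.sub_mul, Matrix.mul_sub, Matrix.mul_sub]
    simp only [Matrix.smul_mul, Matrix.mul_smul, smul_smul, Matrix.mul_one, Matrix.one_mul,
      Complex.star_def, Complex.conj_ofReal]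
    module
  rw [hexp] at h0
  simp only [Matrix.mul_add, Matrix.mul_sub, Matrix.trace_add, Matrix.trace_sub,
    Matrix.mul_smul, Matrix.trace_smul, Complex.add_re, Complex.sub_re, smul_eq_mul,
    Complex.re_ofReal_mul, Matrix.mul_one, hρtr, Complex.one_re, mul_one,
    ← Complex.ofReal_mul, Complex.ofReal_re] at h0
  rw [re_trace_mul_conjTranspose hρ.1] at h0
  have hε' : (0:ℝ) < 2*ε := by linarith
  rw [hc] at h0
  have hne : (2*ε) ≠ 0 := by positivity
  field_simp at h0 ⊢
  nlinarith [h0, hε]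



lemma trace_constraint_step {ρ : Matrix n n ℂ} (hρ : ρ.PosSemidef) {A B : Matrix n n ℂ}
    (h : ((2:ℂ)⁻¹ • (B + Bᴴ) - Aᴴ * A).PosSemidef) :
    (ρ * (Aᴴ * A)).trace.re ≤ (ρ * B).trace.re := by
  have h1 := trace_mul_re_mono hρ h
  have h2 : (ρ * ((2:ℂ)⁻¹ • (B + Bᴴ))).trace.re = (ρ * B).trace.re := by
    have h3 : ((2:ℂ)⁻¹ : ℂ) = ((2⁻¹ : ℝ) : ℂ) := by push_cast; ring
    rw [Matrix.mul_smul, Matrix.trace_smul, h3, smul_eq_mul,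
      Complex.re_ofReal_mul, Matrix.mul_add, Matrix.trace_add, Complex.add_re,
      re_trace_mul_conjTranspose hρ.1]
    ring
  rw [h2] at h1; exact h1

lemma le_zero_of_le_inv (x : ℝ) (h : ∀ ε : ℝ, 0 < ε → x ≤ 1/(4*ε)) : x ≤ 0 := by
  by_contra hx
  push_neg at hx
  have h2 := h (1/(2*x)) (by positivity)
  have h3 : 1/(4*(1/(2*x))) = x/2 := by field_simp; ring
  rw [h3] at h2; linarith

lemma chain {k : ℕ} (hk : 1 ≤ k) {ρ : Matrix n n ℂ} {V : ℕ → Matrix n n ℂ}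
    {Z : Matrix n n ℂ} (hf : QimFeasible k V Z) (hρ : ρ.PosSemidef) (hρtr : ρ.trace = 1)
    {ε R : ℝ} (hε : 0 < ε) (hε1 : ε ≤ 1) (hR : 0 ≤ R) (hZR : (ρ * Z).trace.re ≤ R) :
    (ρ * V 1).trace.re ≤ k/(4*ε) + ε*R := by
  have aux : ∀ m j, 1 ≤ j → j + m = k →
      (ρ * V j).trace.re ≤ ((m:ℝ)+1)/(4*ε) + ε*R := by
    intro m
    induction m with
    | zero =>
      intro j hj hjk
      rw [Nat.add_zero] at hjk; subst hjk
      have h1 := cs_step hρ hρtr (V j) hε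
      have h2 : (ρ * ((V j)ᴴ * V j)).trace.re ≤ (ρ * Z).trace.re :=
        trace_mul_re_mono hρ hf.2.2.2
      push_cast
      nlinarith [h1, h2, hZR, hε]
    | succ m ih =>
      intro j hj hjk
      have hjk' : j < k := by omega
      have h1 := cs_step hρ hρtr (V j) hε
      have h2 := trace_constraint_step hρ (hf.2.2.1 j hj hjk')
      have h3 := ih (j+1) (by omega) (by omega)
      have h4 := mul_le_mul_of_nonneg_left h2 hε.le
      have h5 := mul_le_mul_of_nonneg_left h3 hε.le
      have e0 : ε * (((m:ℝ)+1)/(4*ε)) = ((m:ℝ)+1)/4 := by field_simp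
      have e1 : ((m:ℝ)+1)/4 ≤ ((m:ℝ)+1)/(4*ε) := by
        apply div_le_div_of_nonneg_left (by positivity) (by positivity) (by nlinarith)
      have e2 : ε*(ε*R) ≤ 1*(ε*R) := mul_le_mul_of_nonneg_right hε1 (mul_nonneg hε.le hR)
      rw [one_mul] at e2
      rw [mul_add, e0] at h5
      push_cast
      have e3 : ((m:ℝ)+1+1)/(4*ε) = 1/(4*ε) + ((m:ℝ)+1)/(4*ε) := by ring
      rw [e3]
      linarith [h1, h4, h5, e1, e2]
  have := aux (k-1) 1 le_rfl (by omega)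
  have hcast : ((k-1:ℕ):ℝ) + 1 = (k:ℝ) := by
    have : (k - 1) + 1 = k := by omega
    exact_mod_cast congrArg (Nat.cast (R := ℝ)) this
  rw [hcast] at this
  exact this

lemma kernel_case {k : ℕ} (hk : 1 ≤ k) {ρ : Matrix n n ℂ} {V : ℕ → Matrix n n ℂ}
    {Z : Matrix n n ℂ} (hf : QimFeasible k V Z) (hρ : ρ.PosSemidef) (hρtr : ρ.trace = 1)
    (hZ0 : (ρ * Z).trace.re ≤ 0) : (ρ * V 1).trace.re ≤ 0 := by
  have aux : ∀ m j, 1 ≤ j → j + m = k → (ρ * ((V j)ᴴ * V j)).trace.re ≤ 0 := by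
    intro m
    induction m with
    | zero =>
      intro j hj hjk
      rw [Nat.add_zero] at hjk; subst hjk
      exact le_trans (trace_mul_re_mono hρ hf.2.2.2) hZ0
    | succ m ih =>
      intro j hj hjk
      have h2 := trace_constraint_step hρ (hf.2.2.1 j hj (by omega))
      have h3 := ih (j+1) (by omega) (by omega)
      apply le_trans h2
      apply le_zero_of_le_inv
      intro ε hε
      have h1 := cs_step hρ hρtr (V (j+1)) hε
      nlinarith [h1, h3, hε]
  apply le_zero_of_le_inv
  intro ε hε
  have h1 := cs_step hρ hρtr (V 1) hε
  have h3 := aux (k-1) 1 le_rfl (by omega)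
  nlinarith [h1, h3, hε]



lemma isometry_dot {M : Matrix n n ℂ} (hM : Mᴴ * M = 1) (v : n → ℂ) :
    star (M *ᵥ v) ⬝ᵥ (M *ᵥ v) = star v ⬝ᵥ v := by
  rw [Matrix.star_mulVec, ← Matrix.dotProduct_mulVec, Matrix.mulVec_mulVec, hM,
    Matrix.one_mulVec]

lemma quad_eq {A : Matrix n n ℂ} (hA : A.IsHermitian) (x : n → ℂ) :
    (star x ⬝ᵥ A *ᵥ x).re =
      ∑ i, hA.eigenvalues i *
        Complex.normSq (((star (hA.eigenvectorUnitary : Matrix n n ℂ)) *ᵥ x) i) := by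
  set U := (hA.eigenvectorUnitary : Matrix n n ℂ) with hU
  set c := (star U) *ᵥ x with hc
  have h1 : star x ⬝ᵥ A *ᵥ x = star c ⬝ᵥ (Matrix.diagonal (RCLike.ofReal ∘ hA.eigenvalues)) *ᵥ c := by
    conv_lhs => rw [hA.spectral_theorem, Unitary.conjStarAlgAut_apply]
    rw [← Matrix.mulVec_mulVec, ← Matrix.mulVec_mulVec, Matrix.dotProduct_mulVec]
    congr 1
    rw [hc, Matrix.star_mulVec, Matrix.star_eq_conjTranspose, Matrix.conjTranspose_conjTranspose]
  rw [h1, dotProduct, Complex.re_sum]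
  apply Finset.sum_congr rfl
  intro i _
  rw [Matrix.mulVec_diagonal]
  simp only [Pi.star_apply, Function.comp_apply]
  rw [show star (c i) * ((RCLike.ofReal (hA.eigenvalues i) : ℂ) * c i)
      = (RCLike.ofReal (hA.eigenvalues i) : ℂ) * (star (c i) * c i) from by ring]
  rw [Complex.star_def, ← Complex.normSq_eq_conj_mul_self]
  rw [show (RCLike.ofReal (hA.eigenvalues i) : ℂ) = ((hA.eigenvalues i : ℝ) : ℂ) from rfl]
  rw [← Complex.ofReal_mul, Complex.ofReal_re]

lemma herm_trace_re {A : Matrix n n ℂ} (hA : A.IsHermitian) :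
    A.trace.re = ∑ i, hA.eigenvalues i := by
  have h : A.trace = ∑ i, (hA.eigenvalues i : ℂ) := by
    conv_lhs => rw [hA.spectral_theorem, Unitary.conjStarAlgAut_apply]
    rw [Matrix.trace_mul_cycle, (Matrix.mem_unitaryGroup_iff').mp
      (hA.eigenvectorUnitary).2, Matrix.one_mul, Matrix.trace_diagonal]
    simp
  rw [h, Complex.re_sum]
  simp

lemma dot_self_re (v : n → ℂ) : (star v ⬝ᵥ v).re = ∑ i, Complex.normSq (v i) := by
  rw [dotProduct, Complex.re_sum]
  apply Finset.sum_congr rfl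
  intro i _
  simp only [Pi.star_apply, Complex.star_def, ← Complex.normSq_eq_conj_mul_self,
    Complex.ofReal_re]

lemma exists_lambda {ρ σ : Matrix n n ℂ} (hρ : ρ.PosSemidef) (hρtr : ρ.trace = 1)
    (hσ : σ.PosSemidef) (hsupp : ∀ x : n → ℂ, σ *ᵥ x = 0 → ρ *ᵥ x = 0) :
    ∃ l : ℝ, 0 ≤ l ∧ ∀ x : n → ℂ,
      (star x ⬝ᵥ ρ *ᵥ x).re ≤ l * (star x ⬝ᵥ σ *ᵥ x).re := by
  classical
  set hH := hσ.1 with hHdef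
  set D := hH.eigenvalues with hD
  set U := (hH.eigenvectorUnitary : Matrix n n ℂ) with hUdef
  have hUU : U * star U = 1 := (Matrix.mem_unitaryGroup_iff).mp hH.eigenvectorUnitary.2
  have hUU' : star U * U = 1 := (Matrix.mem_unitaryGroup_iff').mp hH.eigenvectorUnitary.2
  have hDnn : ∀ i, 0 ≤ D i := fun i => hσ.eigenvalues_nonneg i
  by_cases hP : (Finset.univ.filter (fun i => 0 < D i)).Nonempty
  case neg =>
    -- all eigenvalues are zero, σ = 0
    have hD0 : ∀ i, D i = 0 := by
      intro i
      by_contra h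
      exact hP ⟨i, Finset.mem_filter.mpr ⟨Finset.mem_univ i, lt_of_le_of_ne (hDnn i) (Ne.symm h)⟩⟩
    have hσ0 : σ = 0 := by
      have := hH.spectral_theorem
      rw [show (RCLike.ofReal ∘ hH.eigenvalues : n → ℂ) = fun _ => 0 from by
        funext i; simp [show hH.eigenvalues i = 0 from hD0 i]] at this
      rw [Matrix.diagonal_zero] at this
      simpa using this
    refine ⟨1, zero_le_one, fun x => ?_⟩
    have hρx : ρ *ᵥ x = 0 := hsupp x (by rw [hσ0]; simp)
    rw [hσ0, hρx]
    simp
  case pos =>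
    set μ := (Finset.univ.filter (fun i => 0 < D i)).inf' hP D with hμdef
    have hμpos : 0 < μ := by
      rw [hμdef, Finset.lt_inf'_iff]
      intro i hi
      exact (Finset.mem_filter.mp hi).2
    have hμle : ∀ i, 0 < D i → μ ≤ D i := fun i hi =>
      Finset.inf'_le D (Finset.mem_filter.mpr ⟨Finset.mem_univ i, hi⟩)
    refine ⟨1/μ, by positivity, fun x => ?_⟩
    set c := (star U) *ᵥ x with hc
    set vpos : n → ℂ := fun i => if 0 < D i then c i else 0 with hvpos
    set vker : n → ℂ := fun i => if 0 < D i then 0 else c i with hvker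
    set y := U *ᵥ vpos with hy
    set z := U *ᵥ vker with hz
    have hxyz : x = y + z := by
      rw [hy, hz, ← Matrix.mulVec_add]
      have : vpos + vker = c := by
        funext i; by_cases h : 0 < D i <;> simp [hvpos, hvker, h]
      rw [this, hc, Matrix.mulVec_mulVec, hUU, Matrix.one_mulVec]
    have hσz : σ *ᵥ z = 0 := by
      conv_lhs => rw [hH.spectral_theorem, Unitary.conjStarAlgAut_apply]
      rw [hz, Matrix.mulVec_mulVec, Matrix.mul_assoc, Matrix.mul_assoc]
      rw [show star U * U = 1 from hUU']
      rw [Matrix.mul_one]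
      rw [← Matrix.mulVec_mulVec]
      have : Matrix.diagonal (RCLike.ofReal ∘ hH.eigenvalues) *ᵥ vker = 0 := by
        funext i
        rw [Matrix.mulVec_diagonal]
        by_cases h : 0 < D i
        · simp [hvker, h]
        · have : D i = 0 := le_antisymm (not_lt.mp h) (hDnn i)
          simp [Function.comp_apply, show hH.eigenvalues i = 0 from this]
      rw [this, Matrix.mulVec_zero]
    have hρz : ρ *ᵥ z = 0 := hsupp z hσz
    -- x†ρx = y†ρy
    have hsplit : star x ⬝ᵥ ρ *ᵥ x = star y ⬝ᵥ ρ *ᵥ y := by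
      rw [hxyz, star_add, Matrix.mulVec_add, add_dotProduct,
        dotProduct_add, dotProduct_add, hρz]
      have h1 : star z ⬝ᵥ ρ *ᵥ y = 0 := by
        rw [Matrix.dotProduct_mulVec]
        have e : star z ᵥ* ρ = star (ρ *ᵥ z) := by
          conv_rhs => rw [Matrix.star_mulVec]
          rw [hρ.1.eq]
        rw [e, hρz, star_zero, zero_dotProduct]
      rw [h1]
      simp
    -- y†ρy ≤ ‖y‖²
    have hρbound : (star y ⬝ᵥ ρ *ᵥ y).re ≤ (star y ⬝ᵥ y).re := by
      rw [quad_eq hρ.1 y, dot_self_re]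
      have hiso : ∑ i, Complex.normSq (y i)
          = ∑ i, Complex.normSq (((star (hρ.1.eigenvectorUnitary : Matrix n n ℂ)) *ᵥ y) i) := by
        rw [← dot_self_re, ← dot_self_re]
        congr 1
        refine (isometry_dot ?_ y).symm
        rw [Matrix.star_eq_conjTranspose, Matrix.conjTranspose_conjTranspose]
        exact (Matrix.mem_unitaryGroup_iff).mp hρ.1.eigenvectorUnitary.2
      rw [hiso]
      set w := (star (hρ.1.eigenvectorUnitary : Matrix n n ℂ)) *ᵥ y with hw
      have htr : ∑ i, hρ.1.eigenvalues i = 1 := by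
        have := herm_trace_re hρ.1
        rw [hρtr] at this
        simpa using this.symm
      calc ∑ i, hρ.1.eigenvalues i * Complex.normSq (w i)
          ≤ ∑ i, hρ.1.eigenvalues i * ∑ j, Complex.normSq (w j) := by
            apply Finset.sum_le_sum
            intro i _
            apply mul_le_mul_of_nonneg_left _ (hρ.eigenvalues_nonneg i)
            exact Finset.single_le_sum (fun j _ => Complex.normSq_nonneg (w j))
              (Finset.mem_univ i)
        _ = (∑ i, hρ.1.eigenvalues i) * ∑ j, Complex.normSq (w j) := by
            rw [← Finset.sum_mul]
        _ = ∑ j, Complex.normSq (w j) := by rw [htr, one_mul]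
    -- ‖y‖² = ∑ over positive eigenvalue indices
    have hynorm : (star y ⬝ᵥ y).re = ∑ i, if 0 < D i then Complex.normSq (c i) else 0 := by
      rw [hy, isometry_dot hUU', dot_self_re]
      apply Finset.sum_congr rfl
      intro i _
      by_cases h : 0 < D i <;> simp [hvpos, h]
    -- x†σx = ∑ D i * normSq (c i)
    have hσquad : (star x ⬝ᵥ σ *ᵥ x).re = ∑ i, D i * Complex.normSq (c i) :=
      quad_eq hH x
    rw [hsplit, hσquad]
    calc (star y ⬝ᵥ ρ *ᵥ y).re ≤ (star y ⬝ᵥ y).re := hρbound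
      _ = ∑ i, if 0 < D i then Complex.normSq (c i) else 0 := hynorm
      _ ≤ ∑ i, (1/μ) * (D i * Complex.normSq (c i)) := by
          apply Finset.sum_le_sum
          intro i _
          by_cases h : 0 < D i
          · simp only [if_pos h]
            rw [show (1/μ) * (D i * Complex.normSq (c i))
                = (D i / μ) * Complex.normSq (c i) from by ring]
            apply le_mul_of_one_le_left (Complex.normSq_nonneg _)
            rw [le_div_iff₀ hμpos, one_mul]
            exact hμle i h
          · simp only [if_neg h]
            have : D i = 0 := le_antisymm (not_lt.mp h) (hDnn i)
            simp [this]
      _ = (1/μ) * ∑ i, D i * Complex.normSq (c i) := by rw [Finset.mul_sum]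

lemma trace_quad_expand (M B : Matrix n n ℂ) :
    (M * (Bᴴ * B)).trace.re
      = ∑ i, (star (fun j => star (B i j)) ⬝ᵥ M *ᵥ (fun j => star (B i j))).re := by
  have h1 : (M * (Bᴴ * B)).trace = (B * M * Bᴴ).trace := by
    rw [← Matrix.mul_assoc, Matrix.trace_mul_cycle]
  rw [h1, Matrix.trace, Complex.re_sum]
  apply Finset.sum_congr rfl
  intro i _
  congr 1
  simp only [Matrix.diag_apply, Matrix.mul_apply, Matrix.mulVec, dotProduct,
    Pi.star_apply, star_star, Matrix.conjTranspose_apply, Finset.sum_mul, Finset.mul_sum]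
  rw [Finset.sum_comm]
  apply Finset.sum_congr rfl
  intro j _
  apply Finset.sum_congr rfl
  intro l _
  ring

lemma exists_lambda_trace {ρ σ : Matrix n n ℂ} (hρ : ρ.PosSemidef) (hρtr : ρ.trace = 1)
    (hσ : σ.PosSemidef) (hsupp : ∀ x : n → ℂ, σ *ᵥ x = 0 → ρ *ᵥ x = 0) :
    ∃ l : ℝ, 0 ≤ l ∧ ∀ Z : Matrix n n ℂ, Z.PosSemidef →
      (ρ * Z).trace.re ≤ l * (σ * Z).trace.re := by
  obtain ⟨l, hl0, hl⟩ := exists_lambda hρ hρtr hσ hsupp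
  refine ⟨l, hl0, fun Z hZ => ?_⟩
  have hB : ∃ B : Matrix n n ℂ, Z = star B * B := by
    open scoped MatrixOrder in exact CStarAlgebra.nonneg_iff_eq_star_mul_self.mp hZ.nonneg
  obtain ⟨B, rfl⟩ := hB
  rw [Matrix.star_eq_conjTranspose]
  rw [trace_quad_expand ρ B, trace_quad_expand σ B, Finset.mul_sum]
  apply Finset.sum_le_sum
  intro i _
  exact hl _



lemma psd_smul_real {M : Matrix n n ℂ} (hM : M.PosSemidef) {r : ℝ} (hr : 0 ≤ r) :
    (((r : ℝ) : ℂ) • M).PosSemidef := by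
  rw [Matrix.posSemidef_iff_dotProduct_mulVec]
  constructor
  · show (((r:ℝ):ℂ) • M)ᴴ = _
    rw [Matrix.conjTranspose_smul, Complex.star_def, Complex.conj_ofReal, hM.1.eq]
  · intro x
    rw [Matrix.smul_mulVec, dotProduct_smul, smul_eq_mul]
    exact mul_nonneg (Complex.zero_le_real.mpr hr) (hM.dotProduct_mulVec_nonneg x)

lemma smul_conj_smul (A : Matrix n n ℂ) (r : ℝ) :
    (((r:ℝ):ℂ) • A)ᴴ = ((r:ℝ):ℂ) • Aᴴ := by
  rw [Matrix.conjTranspose_smul, Complex.star_def, Complex.conj_ofReal]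

lemma feasible_scale {k : ℕ} (hk : 1 ≤ k) {V : ℕ → Matrix n n ℂ} {Z : Matrix n n ℂ}
    (hf : QimFeasible k V Z) {c : ℝ} (hc : 0 ≤ c) :
    QimFeasible k (fun i => ((c ^ (2 ^ (i-1)) : ℝ) : ℂ) • V i)
      (((c ^ (2^k) : ℝ) : ℂ) • Z) := by
  obtain ⟨hZ, hV1, hcon, hlast⟩ := hf
  have hpow : ∀ i : ℕ, 1 ≤ i → (2:ℕ)^(i-1) + 2^(i-1) = 2^i := by
    intro i hi
    have h1 : i - 1 + 1 = i := by omega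
    rw [← two_mul, ← pow_succ', h1]
  refine ⟨psd_smul_real hZ (by positivity), ?_, ?_, ?_⟩
  · beta_reduce
    have : ((c ^ (2 ^ (1-1)) : ℝ) : ℂ) • V 1 + (((c ^ (2 ^ (1-1)) : ℝ) : ℂ) • V 1)ᴴ
        = ((c ^ (2^(1-1)) : ℝ) : ℂ) • (V 1 + (V 1)ᴴ) := by
      rw [smul_conj_smul, smul_add]
    rw [this]
    exact psd_smul_real hV1 (by positivity)
  · intro i hi hik
    beta_reduce
    have haa : ((c ^ (2^(i-1)) : ℝ) : ℂ) * ((c ^ (2^(i-1)) : ℝ) : ℂ) = ((c ^ (2^i) : ℝ) : ℂ) := by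
      rw [← Complex.ofReal_mul, ← pow_add, hpow i hi]
    have hii : (i + 1) - 1 = i := by omega
    have key : (2:ℂ)⁻¹ • (((c ^ (2^((i+1)-1)) : ℝ) : ℂ) • V (i+1) + (((c ^ (2^((i+1)-1)) : ℝ) : ℂ) • V (i+1))ᴴ)
          - (((c ^ (2^(i-1)) : ℝ) : ℂ) • V i)ᴴ * (((c ^ (2^(i-1)) : ℝ) : ℂ) • V i)
        = ((c ^ (2^i) : ℝ) : ℂ) • ((2:ℂ)⁻¹ • (V (i+1) + (V (i+1))ᴴ) - (V i)ᴴ * V i) := by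
      rw [hii, smul_conj_smul, smul_conj_smul, ← smul_add, Matrix.smul_mul, Matrix.mul_smul,
        smul_smul (((c ^ (2^(i-1)) : ℝ) : ℂ)), haa, smul_sub,
        smul_comm ((2:ℂ)⁻¹) (((c ^ (2^i) : ℝ) : ℂ))]
    rw [key]
    exact psd_smul_real (hcon i hi hik) (by positivity)
  · beta_reduce
    have haa : ((c ^ (2^(k-1)) : ℝ) : ℂ) * ((c ^ (2^(k-1)) : ℝ) : ℂ) = ((c ^ (2^k) : ℝ) : ℂ) := by
      rw [← Complex.ofReal_mul, ← pow_add, hpow k hk]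
    have key : ((c ^ (2^k) : ℝ) : ℂ) • Z
          - (((c ^ (2^(k-1)) : ℝ) : ℂ) • V k)ᴴ * (((c ^ (2^(k-1)) : ℝ) : ℂ) • V k)
        = ((c ^ (2^k) : ℝ) : ℂ) • (Z - (V k)ᴴ * V k) := by
      rw [smul_conj_smul, Matrix.smul_mul, Matrix.mul_smul,
        smul_smul (((c ^ (2^(k-1)) : ℝ) : ℂ)), haa, smul_sub]
    rw [key]
    exact psd_smul_real hlast (by positivity)

lemma trace_mul_smul_re (M N : Matrix n n ℂ) (r : ℝ) :
    (M * (((r:ℝ):ℂ) • N)).trace.re = r * (M * N).trace.re := by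
  rw [Matrix.mul_smul, Matrix.trace_smul, smul_eq_mul, Complex.re_ofReal_mul]

lemma young_aux {u : ℝ} (hu : 0 ≤ u) {p : ℝ} (hp : 1 ≤ p) : p * u - (p - 1) ≤ u ^ p := by
  have h := one_add_mul_self_le_rpow_one_add (s := u - 1) (by linarith) hp
  rw [show (1 + (u-1)) = u by ring] at h
  linarith

lemma matrix_eq_zero_of_mulVec (M : Matrix n n ℂ) (h : ∀ x, M *ᵥ x = 0) : M = 0 := by
  ext i j
  have := congrFun (h (Pi.single j 1)) i
  simpa [Matrix.mulVec_single] using this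

lemma half_eq {ρ V : Matrix n n ℂ} (hρ : ρ.IsHermitian) :
    (ρ * (V + Vᴴ)).trace.re / 2 = (ρ * V).trace.re := by
  rw [Matrix.mul_add, Matrix.trace_add, Complex.add_re, re_trace_mul_conjTranspose hρ]
  ring

lemma obj_eq {k : ℕ} {ρ σ : Matrix n n ℂ} (hρ : ρ.IsHermitian)
    (V : ℕ → Matrix n n ℂ) (Z : Matrix n n ℂ) :
    QimObj k ρ σ V Z
      = alphaIM k * (ρ * V 1).trace.re - (alphaIM k - 1) * (σ * Z).trace.re := by
  unfold QimObj
  rw [half_eq hρ]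

lemma smul_base {ρ : Matrix n n ℂ} (hρ : ρ.IsHermitian) (V : Matrix n n ℂ) (c : ℝ) :
    (ρ * (((c:ℝ):ℂ) • V + (((c:ℝ):ℂ) • V)ᴴ)).trace.re / 2
      = c * ((ρ * (V + Vᴴ)).trace.re / 2) := by
  rw [smul_conj_smul, ← smul_add, trace_mul_smul_re]
  ring

lemma psd_trace_re_pos {σ : Matrix n n ℂ} (hσ : σ.PosSemidef) (hne : σ ≠ 0) :
    0 < σ.trace.re := by
  rw [herm_trace_re hσ.1]
  have hnn : ∀ i ∈ Finset.univ, 0 ≤ hσ.1.eigenvalues i := fun i _ => hσ.eigenvalues_nonneg i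
  rcases (Finset.sum_nonneg hnn).lt_or_eq with h | h
  · exact h
  · exfalso
    apply hne
    have hall := (Finset.sum_eq_zero_iff_of_nonneg hnn).mp h.symm
    have := hσ.1.spectral_theorem
    rw [show (RCLike.ofReal ∘ hσ.1.eigenvalues : n → ℂ) = fun _ => 0 from
      funext fun i => by simp [hall i (Finset.mem_univ i)], Matrix.diagonal_zero] at this
    simpa using this

end QimHelpers

/-- rescaled primal form of `Q^{im}_{α_k}`. -/
theorem stmt_0 (d k : ℕ) (hk : 1 ≤ k) (ρ σ : Matrix (Fin d) (Fin d) ℂ)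
    (hρ : ρ.PosSemidef) (hρtr : ρ.trace = 1) (hσ : σ.PosSemidef)
    (hsupp : ∀ x : Fin d → ℂ, σ *ᵥ x = 0 → ρ *ᵥ x = 0) :
    Qim k ρ σ =
      sSup {q : ℝ | ∃ (V : ℕ → Matrix (Fin d) (Fin d) ℂ) (Z : Matrix (Fin d) (Fin d) ℂ),
        QimFeasible k V Z ∧ (σ * Z).trace.re = 1 ∧
        q = ((ρ * (V 1 + (V 1)ᴴ)).trace.re / 2) ^ alphaIM k} := by
  classical
  obtain ⟨l, hl0, hl⟩ := exists_lambda_trace hρ hρtr hσ hsupp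
  have h2k : (2:ℝ) ≤ 2^k := by
    calc (2:ℝ) = 2^1 := (pow_one 2).symm
      _ ≤ 2^k := by exact pow_le_pow_right₀ one_le_two hk
  have h2kpos : (0:ℝ) < 2^k := by linarith
  have h2k1pos : (0:ℝ) < 2^k - 1 := by linarith
  have h2kne : ((2:ℝ)^k) ≠ 0 := ne_of_gt h2kpos
  have h2k1ne : ((2:ℝ)^k - 1) ≠ 0 := ne_of_gt h2k1pos
  have hαgt : 1 < alphaIM k := by
    simp only [alphaIM]
    have : 0 < 1/((2:ℝ)^k - 1) := by positivity
    linarith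
  have hαpos : 0 < alphaIM k := by linarith
  have hα1pos : 0 < alphaIM k - 1 := by linarith
  -- σ is nonzero, its trace is positive
  have hσne : σ ≠ 0 := by
    intro h
    have hρ0 : ρ = 0 := matrix_eq_zero_of_mulVec ρ (fun x => hsupp x (by rw [h]; simp))
    rw [hρ0, Matrix.trace_zero] at hρtr
    exact absurd hρtr (by norm_num)
  have htσ : 0 < σ.trace.re := psd_trace_re_pos hσ hσne
  set S : Set ℝ := {q : ℝ | ∃ V Z, QimFeasible k V Z ∧ q = QimObj k ρ σ V Z} with hSdef
  set S' : Set ℝ :=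
      {q : ℝ | ∃ (V : ℕ → Matrix (Fin d) (Fin d) ℂ) (Z : Matrix (Fin d) (Fin d) ℂ),
        QimFeasible k V Z ∧ (σ * Z).trace.re = 1 ∧
        q = ((ρ * (V 1 + (V 1)ᴴ)).trace.re / 2) ^ alphaIM k} with hS'def
  -- 0 is a member of both sets
  have hfeas0 : QimFeasible k (fun _ : ℕ => (0 : Matrix (Fin d) (Fin d) ℂ)) 0 := by
    refine ⟨Matrix.PosSemidef.zero, ?_, fun i _ _ => ?_, ?_⟩ <;>
      simp [Matrix.PosSemidef.zero]
  have mem0S : (0:ℝ) ∈ S := ⟨_, _, hfeas0, by simp [QimObj]⟩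
  set r : ℝ := (σ.trace.re)⁻¹ with hrdef
  have hfeas1 : QimFeasible k (fun _ : ℕ => (0 : Matrix (Fin d) (Fin d) ℂ))
      (((r:ℝ):ℂ) • 1) := by
    refine ⟨psd_smul_real (Matrix.PosSemidef.one : (1 : Matrix (Fin d) (Fin d) ℂ).PosSemidef) (inv_nonneg.mpr htσ.le), ?_,
      fun i _ _ => ?_, ?_⟩
    · simp [Matrix.PosSemidef.zero]
    · simp [Matrix.PosSemidef.zero]
    · show (((r:ℝ):ℂ) • (1 : Matrix (Fin d) (Fin d) ℂ)
          - (0 : Matrix (Fin d) (Fin d) ℂ)ᴴ * 0).PosSemidef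
      rw [show (((r:ℝ):ℂ) • (1 : Matrix (Fin d) (Fin d) ℂ)
          - (0 : Matrix (Fin d) (Fin d) ℂ)ᴴ * 0) = ((r:ℝ):ℂ) • 1 from by simp]
      exact psd_smul_real (Matrix.PosSemidef.one :
        (1 : Matrix (Fin d) (Fin d) ℂ).PosSemidef) (inv_nonneg.mpr htσ.le)
  have memtr : (σ * (((r:ℝ):ℂ) • 1)).trace.re = 1 := by
    rw [trace_mul_smul_re, Matrix.mul_one]
    exact inv_mul_cancel₀ htσ.ne'
  have mem0S' : (0:ℝ) ∈ S' := by
    refine ⟨_, _, hfeas1, memtr, ?_⟩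
    have hb : ((ρ * ((0:Matrix (Fin d) (Fin d) ℂ)
        + (0:Matrix (Fin d) (Fin d) ℂ)ᴴ)).trace.re / 2) = 0 := by simp
    rw [hb, Real.zero_rpow (ne_of_gt hαpos)]
  -- S' is bounded above
  have bddS' : BddAbove S' := by
    refine ⟨((k:ℝ)/4 + l) ^ alphaIM k, fun q hq => ?_⟩
    obtain ⟨V, Z, hfz, hs1, rfl⟩ := hq
    rw [half_eq hρ.1]
    have hT0 : 0 ≤ (ρ * V 1).trace.re := by
      rw [← half_eq hρ.1]
      exact div_nonneg (trace_mul_re_nonneg hρ hfz.2.1) (by norm_num)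
    have hZR : (ρ * Z).trace.re ≤ l := by
      have := hl Z hfz.1
      rwa [hs1, mul_one] at this
    have hch := chain hk hfz hρ hρtr one_pos le_rfl hl0 hZR
    have hle : (ρ * V 1).trace.re ≤ (k:ℝ)/4 + l := by
      rw [show (k:ℝ)/(4*1) + 1*l = (k:ℝ)/4 + l by ring] at hch
      exact hch
    exact Real.rpow_le_rpow hT0 hle hαpos.le
  -- S is bounded above
  set ε0 : ℝ := min 1 ((alphaIM k - 1)/(alphaIM k * (l+1))) with hε0def
  have hε0pos : 0 < ε0 := lt_min one_pos (by positivity)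
  have hε0le1 : ε0 ≤ 1 := min_le_left _ _
  have hε0le : ε0 ≤ (alphaIM k - 1)/(alphaIM k * (l+1)) := min_le_right _ _
  have hε0l : alphaIM k * ε0 * l ≤ alphaIM k - 1 := by
    have h1 : ε0 * (alphaIM k * (l+1)) ≤ alphaIM k - 1 := by
      rw [← le_div_iff₀ (by positivity)]
      exact hε0le
    nlinarith [hε0pos.le, hαpos.le]
  have bddS : BddAbove S := by
    refine ⟨alphaIM k * ((k:ℝ)/(4*ε0)), fun q hq => ?_⟩
    obtain ⟨V, Z, hfz, rfl⟩ := hq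
    rw [obj_eq hρ.1]
    have hs0 : 0 ≤ (σ * Z).trace.re := trace_mul_re_nonneg hσ hfz.1
    have hZR : (ρ * Z).trace.re ≤ l * (σ * Z).trace.re := hl Z hfz.1
    have hch := chain hk hfz hρ hρtr hε0pos hε0le1 (mul_nonneg hl0 hs0) hZR
    have h1 := mul_le_mul_of_nonneg_left hch hαpos.le
    rw [mul_add] at h1
    have h2 : alphaIM k * (ε0 * (l * (σ * Z).trace.re))
        ≤ (alphaIM k - 1) * (σ * Z).trace.re := by
      have := mul_le_mul_of_nonneg_right hε0l hs0
      nlinarith [this]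
    linarith
  -- now prove the equality of suprema
  unfold Qim
  apply le_antisymm
  · -- sSup S ≤ sSup S'
    apply csSup_le ⟨0, mem0S⟩
    rintro q ⟨V, Z, hfz, rfl⟩
    rw [obj_eq hρ.1]
    set T := (ρ * V 1).trace.re with hTdef
    set s := (σ * Z).trace.re with hsdef
    have hs0 : 0 ≤ s := trace_mul_re_nonneg hσ hfz.1
    have hT0 : 0 ≤ T := by
      rw [hTdef, ← half_eq hρ.1]
      exact div_nonneg (trace_mul_re_nonneg hρ hfz.2.1) (by norm_num)
    rcases hs0.lt_or_eq with hspos | hs0'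
    · -- s > 0 : rescale to trace one
      set a : ℝ := s ^ (-(1/((2:ℝ)^k))) with hadef
      have ha0 : 0 ≤ a := Real.rpow_nonneg hspos.le _
      have hapow : a ^ ((2:ℕ)^k) = s⁻¹ := by
        rw [← Real.rpow_natCast a (2^k), hadef, ← Real.rpow_mul hspos.le]
        push_cast
        rw [show -(1/((2:ℝ)^k)) * (2:ℝ)^k = -1 by field_simp]
        exact Real.rpow_neg_one s
      have hV1 : ((a ^ 2 ^ (1-1) : ℝ) : ℂ) = ((a:ℝ):ℂ) := by norm_num
      have hmem : (a * T) ^ alphaIM k ∈ S' := by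
        refine ⟨_, _, feasible_scale hk hfz ha0, ?_, ?_⟩
        · rw [trace_mul_smul_re, hapow, ← hsdef]
          exact inv_mul_cancel₀ hspos.ne'
        · rw [hV1, smul_base hρ.1, half_eq hρ.1, ← hTdef]
      have hyoung : alphaIM k * T - (alphaIM k - 1) * s ≤ (a*T) ^ alphaIM k := by
        have hu := young_aux (div_nonneg hT0 hspos.le) hαgt.le
        have h1 := mul_le_mul_of_nonneg_left hu hspos.le
        have h2 : s * (alphaIM k * (T/s) - (alphaIM k - 1))
            = alphaIM k * T - (alphaIM k - 1) * s := by
          field_simp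
        have h3 : s * ((T/s) ^ alphaIM k) = (a*T) ^ alphaIM k := by
          rw [Real.div_rpow hT0 hspos.le, Real.mul_rpow ha0 hT0, hadef,
            ← Real.rpow_mul hspos.le,
            show -(1/((2:ℝ)^k)) * alphaIM k = 1 - alphaIM k by
              simp only [alphaIM]; field_simp; ring,
            Real.rpow_sub hspos, Real.rpow_one]
          ring
        rw [h2, h3] at h1
        exact h1
      exact le_trans hyoung (le_csSup bddS' hmem)
    · -- s = 0 : objective is 0
      have hZ0 : (ρ * Z).trace.re ≤ 0 := by
        have := hl Z hfz.1
        rw [← hsdef, ← hs0', mul_zero] at this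
        exact this
      have hTz : T = 0 := le_antisymm (kernel_case hk hfz hρ hρtr hZ0) hT0
      rw [hTz, ← hs0']
      simpa using le_csSup bddS' mem0S'
  · -- sSup S' ≤ sSup S
    apply csSup_le ⟨0, mem0S'⟩
    rintro q ⟨V, Z, hfz, hs1, rfl⟩
    rw [half_eq hρ.1]
    set T := (ρ * V 1).trace.re with hTdef
    have hT0 : 0 ≤ T := by
      rw [hTdef, ← half_eq hρ.1]
      exact div_nonneg (trace_mul_re_nonneg hρ hfz.2.1) (by norm_num)
    rcases hT0.lt_or_eq with hTpos | hT0'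
    · -- T > 0 : rescale and exhibit membership in S
      set c : ℝ := T ^ (1/((2:ℝ)^k - 1)) with hcdef
      have hc0 : 0 ≤ c := Real.rpow_nonneg hTpos.le _
      have hcT : c * T = T ^ alphaIM k := by
        have h1 : c * T = T^(1/((2:ℝ)^k-1)) * T^(1:ℝ) := by rw [Real.rpow_one]
        rw [h1, ← Real.rpow_add hTpos]
        congr 1
        simp only [alphaIM]
        try ring
      have hcpow : c ^ ((2:ℕ)^k) = T ^ alphaIM k := by
        rw [← Real.rpow_natCast c (2^k), hcdef, ← Real.rpow_mul hTpos.le]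
        push_cast
        congr 1
        simp only [alphaIM]
        field_simp
        try ring
      have hV1 : ((c ^ 2 ^ (1-1) : ℝ) : ℂ) = ((c:ℝ):ℂ) := by norm_num
      have hmem : T ^ alphaIM k ∈ S := by
        refine ⟨_, _, feasible_scale hk hfz hc0, ?_⟩
        rw [obj_eq hρ.1, hV1, trace_mul_smul_re, trace_mul_smul_re, ← hTdef, hs1,
          hcpow, hcT]
        ring
      exact le_csSup bddS hmem
    · -- T = 0 : element is 0
      rw [← hT0', Real.zero_rpow (ne_of_gt hαpos)]
      exact le_csSup bddS mem0S
end

section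
/- For every integer k ≥ 1, every complex d×d density matrix ρ, every positive semidefinite σ with supp(ρ) ⊆ supp(σ), and every positive definite Hermitian d×d matrix ω, one has α_k·Re tr(ρω) − (α_k − 1)·Re tr(σ·ω^{2^k}) ≤ Q^{im}_{α_k}(ρ‖σ); in particular the choice V_i = ω^{2^{i−1}} for 1 ≤ i ≤ k and Z = ω^{2^k} is a feasible point of the defining program of Q^{im}_{α_k}(ρ‖σ). -/
open Matrix ComplexOrder

section stmt5helpers
open Complex

section helpers
variable {n : Type*} [Fintype n] [DecidableEq n]

open scoped MatrixOrder in
noncomputable def Matrix.PosSemidef.sqrt {A : Matrix n n ℂ} (_ : A.PosSemidef) : Matrix n n ℂ :=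
  CFC.sqrt A

open scoped MatrixOrder in
lemma Matrix.PosSemidef.posSemidef_sqrt {A : Matrix n n ℂ} (hA : A.PosSemidef) :
    hA.sqrt.PosSemidef :=
  Matrix.nonneg_iff_posSemidef.mp (CFC.sqrt_nonneg A)

open scoped MatrixOrder in
lemma Matrix.PosSemidef.sqrt_mul_self {A : Matrix n n ℂ} (hA : A.PosSemidef) :
    hA.sqrt * hA.sqrt = A :=
  CFC.sqrt_mul_sqrt_self A (Matrix.nonneg_iff_posSemidef.mpr hA)

lemma trace_re_nonneg_s5 {M : Matrix n n ℂ} (hM : M.PosSemidef) : 0 ≤ M.trace.re := by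
  have h : (0:ℂ) ≤ M.trace := by
    rw [Matrix.trace]
    refine Finset.sum_nonneg fun i _ => ?_
    have := hM.dotProduct_mulVec_nonneg (Pi.single i 1)
    simpa [Matrix.mulVec_single, dotProduct, Pi.single_apply, Finset.sum_ite_eq'] using this
  exact (Complex.le_def.mp h).1

lemma trace_mul_re_nonneg_s5 {A B : Matrix n n ℂ} (hA : A.PosSemidef) (hB : B.PosSemidef) :
    0 ≤ ((A * B).trace).re := by
  have hN := hB.posSemidef_sqrt
  have hNN : hB.sqrt * hB.sqrt = B := hB.sqrt_mul_self
  have h1 : (A * B).trace = ((hB.sqrt)ᴴ * A * hB.sqrt).trace := by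
    conv_lhs => rw [← hNN]
    rw [hN.1, ← Matrix.mul_assoc, Matrix.trace_mul_cycle, Matrix.mul_assoc]
  rw [h1]
  exact trace_re_nonneg_s5 (hA.conjTranspose_mul_mul_same _)

lemma trace_smul_re (r : ℝ) (M : Matrix n n ℂ) :
    (((r:ℂ) • M).trace).re = r * M.trace.re := by
  rw [Matrix.trace_smul, smul_eq_mul, Complex.re_ofReal_mul]

/-- monotonicity of `Re tr (σ ⬝ ·)` along the Loewner order -/
lemma re_trace_mul_mono {σ A B : Matrix n n ℂ} (hσ : σ.PosSemidef)
    (h : (B - A).PosSemidef) : ((σ * A).trace).re ≤ ((σ * B).trace).re := by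
  have := trace_mul_re_nonneg_s5 hσ h
  rw [Matrix.mul_sub, Matrix.trace_sub, Complex.sub_re] at this
  linarith

end helpers

lemma norm_loewner {n : Type*} [Fintype n] [DecidableEq n] {u : ℝ} (hu : 0 < u)
    (V : Matrix n n ℂ) :
    (((u:ℝ):ℂ) • 1 + ((u⁻¹:ℝ):ℂ) • (Vᴴ * V) - (V + Vᴴ)).PosSemidef := by
  set a : ℂ := ((Real.sqrt u : ℝ) : ℂ) with ha
  set b : ℂ := ((Real.sqrt u⁻¹ : ℝ) : ℂ) with hb
  have hab : a * b = 1 := by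
    rw [ha, hb, ← Complex.ofReal_mul, ← Real.sqrt_mul hu.le, mul_inv_cancel₀ hu.ne',
      Real.sqrt_one, Complex.ofReal_one]
  have ha2 : a * a = (u:ℂ) := by
    rw [ha, ← Complex.ofReal_mul, Real.mul_self_sqrt hu.le]
  have hb2 : b * b = ((u⁻¹:ℝ):ℂ) := by
    rw [hb, ← Complex.ofReal_mul, Real.mul_self_sqrt (inv_nonneg.mpr hu.le)]
  set W : Matrix n n ℂ := a • 1 - b • V with hW
  have key : Wᴴ * W = ((u:ℝ):ℂ) • 1 + ((u⁻¹:ℝ):ℂ) • (Vᴴ * V) - (V + Vᴴ) := by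
    have hsa : star a = a := by rw [ha]; exact Complex.conj_ofReal _
    have hsb : star b = b := by rw [hb]; exact Complex.conj_ofReal _
    rw [hW, conjTranspose_sub, conjTranspose_smul, conjTranspose_smul, conjTranspose_one,
      hsa, hsb]
    rw [sub_mul, mul_sub, mul_sub]
    simp only [smul_mul_assoc, mul_smul_comm, one_mul, mul_one, smul_smul]
    rw [ha2, hb2, mul_comm b a, hab, one_smul, one_smul]
    abel
  rw [← key]
  exact posSemidef_conjTranspose_mul_self W

variable {d : ℕ}

lemma quad_form_sq (S : Matrix (Fin d) (Fin d) ℂ) (hS : Sᴴ = S) (x : Fin d → ℂ) :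
    star x ⬝ᵥ ((S * S) *ᵥ x) = star (S *ᵥ x) ⬝ᵥ (S *ᵥ x) := by
  rw [← Matrix.mulVec_mulVec, Matrix.dotProduct_mulVec, Matrix.star_mulVec, hS]

lemma dot_self_eq_norm (v : Fin d → ℂ) :
    star v ⬝ᵥ v =
      ((‖(WithLp.equiv 2 (Fin d → ℂ)).symm v‖ ^ 2 : ℝ) : ℂ) := by
  have h1 : ‖(WithLp.equiv 2 (Fin d → ℂ)).symm v‖ ^ 2 = ∑ i, ‖v i‖ ^ 2 := by
    rw [EuclideanSpace.norm_eq]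
    rw [Real.sq_sqrt (Finset.sum_nonneg fun i _ => sq_nonneg _)]
    rfl
  rw [h1]
  push_cast
  rw [dotProduct]
  refine Finset.sum_congr rfl fun i _ => ?_
  rw [Pi.star_apply, Complex.star_def]
  rw [← Complex.normSq_eq_conj_mul_self, Complex.normSq_eq_norm_sq]
  norm_cast

lemma exists_dom (ρ σ : Matrix (Fin d) (Fin d) ℂ) (hρ : ρ.PosSemidef) (hσ : σ.PosSemidef)
    (hsupp : ∀ x : Fin d → ℂ, σ *ᵥ x = 0 → ρ *ᵥ x = 0) :
    ∃ c : ℝ, 0 ≤ c ∧ (((c:ℝ):ℂ) • σ - ρ).PosSemidef := by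
  classical
  set S := hσ.sqrt with hSdef
  set R := hρ.sqrt with hRdef
  have hSH : Sᴴ = S := hσ.posSemidef_sqrt.1
  have hRH : Rᴴ = R := hρ.posSemidef_sqrt.1
  have hSS : S * S = σ := hσ.sqrt_mul_self
  have hRR : R * R = ρ := hρ.sqrt_mul_self
  -- kernel inclusion
  have hker0 : ∀ x : Fin d → ℂ, S *ᵥ x = 0 → R *ᵥ x = 0 := by
    intro x hx
    have hσx : σ *ᵥ x = 0 := by
      rw [← hSS, ← Matrix.mulVec_mulVec, hx, Matrix.mulVec_zero]
    have hρx := hsupp x hσx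
    have h0 : star (R *ᵥ x) ⬝ᵥ (R *ᵥ x) = 0 := by
      rw [← quad_form_sq R hRH, hRR, hρx, dotProduct_zero]
    exact dotProduct_star_self_eq_zero.mp h0
  -- Euclidean space setup
  set E := EuclideanSpace ℂ (Fin d)
  let e : E ≃ₗ[ℂ] (Fin d → ℂ) := WithLp.linearEquiv 2 ℂ (Fin d → ℂ)
  let s : E →ₗ[ℂ] E := e.symm.toLinearMap ∘ₗ S.mulVecLin ∘ₗ e.toLinearMap
  let r : E →ₗ[ℂ] E := e.symm.toLinearMap ∘ₗ R.mulVecLin ∘ₗ e.toLinearMap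
  have hs_apply : ∀ x : E, s x = (WithLp.equiv 2 (Fin d → ℂ)).symm (S *ᵥ (e x)) := fun _ => rfl
  have hr_apply : ∀ x : E, r x = (WithLp.equiv 2 (Fin d → ℂ)).symm (R *ᵥ (e x)) := fun _ => rfl
  have hker : LinearMap.ker s ≤ LinearMap.ker r := by
    intro x hx
    rw [LinearMap.mem_ker] at hx ⊢
    have h1 : S *ᵥ (e x) = 0 := by
      have := congrArg (WithLp.equiv 2 (Fin d → ℂ)) (hs_apply x)
      rw [hx] at this
      simpa using this.symm
    have h2 := hker0 _ h1
    rw [hr_apply, h2]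
    simp
  -- factorization r = T ∘ s
  set p := LinearMap.ker s with hp
  let s' : (E ⧸ p) →ₗ[ℂ] E := p.liftQ s le_rfl
  let r' : (E ⧸ p) →ₗ[ℂ] E := p.liftQ r hker
  have hs'inj : LinearMap.ker s' = ⊥ := Submodule.ker_liftQ_eq_bot _ _ _ le_rfl
  obtain ⟨g, hg⟩ := s'.exists_leftInverse_of_injective hs'inj
  let T : E →ₗ[ℂ] E := r' ∘ₗ g
  have hT : ∀ x : E, T (s x) = r x := by
    intro x
    have h1 : s x = s' (p.mkQ x) := rfl
    have h2 : r x = r' (p.mkQ x) := rfl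
    have h3 : g (s' (p.mkQ x)) = p.mkQ x := by
      have := congrArg (fun f => f (p.mkQ x)) hg
      simpa using this
    simp only [T, LinearMap.comp_apply, h1, h3, h2]
  -- continuity
  let Tc : E →L[ℂ] E := LinearMap.toContinuousLinearMap T
  refine ⟨‖Tc‖ ^ 2, sq_nonneg _, Matrix.PosSemidef.of_dotProduct_mulVec_nonneg ?_ ?_⟩
  · -- Hermitian
    have : (((‖Tc‖^2 : ℝ):ℂ) • σ - ρ)ᴴ = ((‖Tc‖^2 : ℝ):ℂ) • σ - ρ := by
      rw [conjTranspose_sub, conjTranspose_smul, hσ.1, hρ.1, Complex.star_def,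
        Complex.conj_ofReal]
    exact this
  · intro x
    have hbound : ‖r ((WithLp.equiv 2 (Fin d → ℂ)).symm x)‖ ≤
        ‖Tc‖ * ‖s ((WithLp.equiv 2 (Fin d → ℂ)).symm x)‖ := by
      rw [← hT]
      exact Tc.le_opNorm _
    set y := (WithLp.equiv 2 (Fin d → ℂ)).symm x with hy
    have hey : e y = x := rfl
    have hq1 : star x ⬝ᵥ (σ *ᵥ x) = ((‖s y‖ ^ 2 : ℝ) : ℂ) := by
      rw [← hSS, quad_form_sq S hSH, dot_self_eq_norm, hs_apply, hey]
    have hq2 : star x ⬝ᵥ (ρ *ᵥ x) = ((‖r y‖ ^ 2 : ℝ) : ℂ) := by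
      rw [← hRR, quad_form_sq R hRH, dot_self_eq_norm, hr_apply, hey]
    have hexp : star x ⬝ᵥ ((((‖Tc‖^2 : ℝ):ℂ) • σ - ρ) *ᵥ x)
        = ((‖Tc‖^2 * ‖s y‖^2 - ‖r y‖^2 : ℝ) : ℂ) := by
      rw [Matrix.sub_mulVec, dotProduct_sub, Matrix.smul_mulVec,
        dotProduct_smul, hq1, hq2, smul_eq_mul]
      push_cast
      ring
    rw [hexp]
    rw [Complex.zero_le_real]
    have : ‖r y‖ ^ 2 ≤ (‖Tc‖ * ‖s y‖) ^ 2 := by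
      apply sq_le_sq' _ hbound
      nlinarith [norm_nonneg (r y), norm_nonneg (s y), norm_nonneg Tc, hbound]
    nlinarith [this]

lemma qim_bddAbove (k : ℕ) (hk : 1 ≤ k) (ρ σ : Matrix (Fin d) (Fin d) ℂ)
    (hρ : ρ.PosSemidef) (hσ : σ.PosSemidef)
    (hsupp : ∀ x : Fin d → ℂ, σ *ᵥ x = 0 → ρ *ᵥ x = 0) :
    BddAbove {q : ℝ | ∃ V Z, QimFeasible k V Z ∧ q = QimObj k ρ σ V Z} := by
  obtain ⟨c, hc, hdom⟩ := exists_dom ρ σ hρ hσ hsupp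
  set α := alphaIM k with hα
  have h2k : (1:ℝ) < 2 ^ k := one_lt_pow₀ one_lt_two (by omega)
  have hα1 : 0 < α - 1 := by
    have hpos : (0:ℝ) < 2 ^ k - 1 := by linarith
    have heq : α - 1 = 1 / (2 ^ k - 1) := by rw [hα]; unfold alphaIM; ring
    rw [heq]; positivity
  have hαpos : (0:ℝ) < α := by linarith
  set T := σ.trace.re with hTdef
  have hT : 0 ≤ T := trace_re_nonneg_s5 hσ
  set u := max 1 (α * c / (2 * (α - 1))) with hu
  have hu1 : (1:ℝ) ≤ u := le_max_left _ _
  have hu0 : (0:ℝ) < u := by linarith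
  have hinv0 : (0:ℝ) ≤ u⁻¹ := by positivity
  have hinv1 : u⁻¹ ≤ 1 := by
    rw [inv_le_one_iff₀]; right; exact hu1
  have huinv : u * u⁻¹ = 1 := mul_inv_cancel₀ hu0.ne'
  have hcoef : α * c / 2 * u⁻¹ ≤ α - 1 := by
    have h1 : α * c / (2 * (α - 1)) ≤ u := le_max_right _ _
    have h2 : α * c ≤ u * (2 * (α - 1)) :=
      (div_le_iff₀ (by positivity : (0:ℝ) < 2 * (α - 1))).mp h1
    have h2' : α * c / 2 ≤ (α - 1) * u := by linarith
    calc α * c / 2 * u⁻¹ ≤ ((α - 1) * u) * u⁻¹ := mul_le_mul_of_nonneg_right h2' hinv0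
      _ = α - 1 := by rw [mul_assoc, huinv, mul_one]
  refine ⟨α * c * u * T, ?_⟩
  rintro q ⟨V, Z, ⟨hZ, hV1, hmid, hlast⟩, rfl⟩
  set z := ((σ * Z).trace).re with hzdef
  have hz : 0 ≤ z := trace_mul_re_nonneg_s5 hσ hZ
  -- recurrence inequality for each i
  have hrec : ∀ i, ((σ * (V i + (V i)ᴴ)).trace).re ≤
      u * T + u⁻¹ * ((σ * ((V i)ᴴ * V i)).trace).re := by
    intro i
    have h := re_trace_mul_mono hσ (norm_loewner hu0 (V i))
    have hexp : ((σ * (((u:ℝ):ℂ) • 1 + ((u⁻¹:ℝ):ℂ) • ((V i)ᴴ * V i))).trace).re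
        = u * T + u⁻¹ * ((σ * ((V i)ᴴ * V i)).trace).re := by
      rw [Matrix.mul_add, Matrix.trace_add, Complex.add_re, Matrix.mul_smul,
        Matrix.mul_smul, Matrix.mul_one, trace_smul_re, trace_smul_re]
    rw [hexp] at h
    exact h
  -- middle constraints in trace form
  have hmid' : ∀ i, 1 ≤ i → i < k →
      ((σ * ((V i)ᴴ * V i)).trace).re ≤
        2⁻¹ * ((σ * (V (i+1) + (V (i+1))ᴴ)).trace).re := by
    intro i h1 h2
    have h := re_trace_mul_mono hσ (hmid i h1 h2)
    have hexp : ((σ * ((2:ℂ)⁻¹ • (V (i+1) + (V (i+1))ᴴ))).trace).re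
        = 2⁻¹ * ((σ * (V (i+1) + (V (i+1))ᴴ)).trace).re := by
      have h2c : (2:ℂ)⁻¹ = (((2:ℝ)⁻¹ : ℝ) : ℂ) := by push_cast; ring
      rw [h2c, Matrix.mul_smul, trace_smul_re]
    rw [hexp] at h
    exact h
  have hlast' : ((σ * ((V k)ᴴ * V k)).trace).re ≤ z := by
    have h := re_trace_mul_mono hσ hlast
    rw [hzdef]; exact h
  -- downward induction
  have main : ∀ j, j ≤ k - 1 →
      ((σ * (V (k - j) + (V (k - j))ᴴ)).trace).re ≤ 2 * u * T + u⁻¹ * z := by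
    intro j
    induction j with
    | zero =>
      intro _
      simp only [Nat.sub_zero]
      have h1 := hrec k
      have h2 := hlast'
      linarith [mul_le_mul_of_nonneg_left h2 hinv0, mul_nonneg hu0.le hT]
    | succ j ih =>
      intro hj
      have hjk : j ≤ k - 1 := by omega
      have ihb := ih hjk
      set i := k - (j + 1) with hi
      have hi1 : 1 ≤ i := by omega
      have hik : i < k := by omega
      have hip : i + 1 = k - j := by omega
      have h1 := hrec i
      have h2 := hmid' i hi1 hik
      rw [hip] at h2
      have h3 : ((σ * ((V i)ᴴ * V i)).trace).re ≤ 2⁻¹ * (2 * u * T + u⁻¹ * z) := by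
        linarith [ihb]
      have h4 := mul_le_mul_of_nonneg_left h3 hinv0
      have h5 : u⁻¹ * (2⁻¹ * (2 * u * T + u⁻¹ * z)) = (u⁻¹ * u) * T + (u⁻¹ * u⁻¹) * (z / 2) := by
        ring
      have h6 : u⁻¹ * u = 1 := by rw [mul_comm]; exact huinv
      have h7 : (u⁻¹ * u⁻¹) * (z / 2) ≤ u⁻¹ * z := by
        nlinarith [mul_le_mul_of_nonneg_right (mul_le_mul_of_nonneg_left hinv1 hinv0) hz,
          mul_nonneg hinv0 hinv0, hz, hinv0]
      have h8 : 0 ≤ u * T := mul_nonneg hu0.le hT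
      rw [h5, h6, one_mul] at h4
      have h9 : T ≤ u * T := le_mul_of_one_le_left hT hu1
      linarith [h1, h4, h7, h8, h9]
  have ha1 : ((σ * (V 1 + (V 1)ᴴ)).trace).re ≤ 2 * u * T + u⁻¹ * z := by
    have := main (k - 1) le_rfl
    have hk1 : k - (k - 1) = 1 := by omega
    rwa [hk1] at this
  -- domination: ρ-trace vs σ-trace
  have hρ1 : ((ρ * (V 1 + (V 1)ᴴ)).trace).re ≤ c * ((σ * (V 1 + (V 1)ᴴ)).trace).re := by
    have h := trace_mul_re_nonneg_s5 hdom hV1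
    rw [Matrix.sub_mul, Matrix.trace_sub, Complex.sub_re, smul_mul_assoc,
      trace_smul_re] at h
    linarith
  -- conclude
  rw [QimObj]
  rw [← hα]
  have h1 : ((ρ * (V 1 + (V 1)ᴴ)).trace).re ≤ c * (2 * u * T + u⁻¹ * z) :=
    le_trans hρ1 (mul_le_mul_of_nonneg_left ha1 hc)
  have step1 : α * (((ρ * (V 1 + (V 1)ᴴ)).trace).re / 2) ≤
      α * c / 2 * (2 * u * T + u⁻¹ * z) := by
    calc α * (((ρ * (V 1 + (V 1)ᴴ)).trace).re / 2)
        = (α * ((ρ * (V 1 + (V 1)ᴴ)).trace).re) / 2 := by ring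
      _ ≤ (α * (c * (2 * u * T + u⁻¹ * z))) / 2 := by
          linarith [mul_le_mul_of_nonneg_left h1 hαpos.le]
      _ = α * c / 2 * (2 * u * T + u⁻¹ * z) := by ring
  have step2 : α * c / 2 * (2 * u * T + u⁻¹ * z) - (α - 1) * z ≤ α * c * u * T := by
    have hh : α * c / 2 * u⁻¹ * z ≤ (α - 1) * z :=
      mul_le_mul_of_nonneg_right hcoef hz
    calc α * c / 2 * (2 * u * T + u⁻¹ * z) - (α - 1) * z
        = α * c * u * T + (α * c / 2 * u⁻¹ * z - (α - 1) * z) := by ring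
      _ ≤ α * c * u * T := by linarith [hh]
  linarith [step1, step2]

end stmt5helpers

/-- for positive definite `ω`, the point `Vᵢ = ω^{2^{i-1}}`, `Z = ω^{2^k}`
is feasible and its objective value lower bounds `Q^{im}_{α_k}(ρ‖σ)`. -/
theorem stmt_5 (d k : ℕ) (hk : 1 ≤ k) (ρ σ ω : Matrix (Fin d) (Fin d) ℂ)
    (hρ : ρ.PosSemidef) (hρtr : ρ.trace = 1) (hσ : σ.PosSemidef)
    (hsupp : ∀ x : Fin d → ℂ, σ *ᵥ x = 0 → ρ *ᵥ x = 0)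
    (hω : ω.PosDef) :
    QimFeasible k (fun i => ω ^ (2 ^ (i - 1))) (ω ^ (2 ^ k)) ∧
    alphaIM k * (ρ * ω).trace.re - (alphaIM k - 1) * (σ * ω ^ (2 ^ k)).trace.re ≤
      Qim k ρ σ := by
  have hherm : ∀ m : ℕ, (ω ^ m)ᴴ = ω ^ m := fun m => hω.1.pow m
  have hpowpsd : ∀ m : ℕ, (ω ^ m).PosSemidef := fun m => hω.posSemidef.pow m
  have hsq : ∀ i : ℕ, 1 ≤ i → ω ^ (2 ^ (i - 1)) * ω ^ (2 ^ (i - 1)) = ω ^ (2 ^ i) := by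
    intro i hi
    rw [← pow_add]
    congr 1
    have : 2 ^ (i - 1) + 2 ^ (i - 1) = 2 ^ (i - 1 + 1) := by rw [pow_succ]; omega
    rw [this]
    congr 1
    omega
  have hhalf : ∀ X : Matrix (Fin d) (Fin d) ℂ, (2:ℂ)⁻¹ • (X + X) = X := by
    intro X
    rw [← two_smul ℂ X, smul_smul]
    norm_num
  have hfeas : QimFeasible k (fun i => ω ^ (2 ^ (i - 1))) (ω ^ (2 ^ k)) := by
    refine ⟨hpowpsd _, ?_, ?_, ?_⟩
    · simp only [Nat.sub_self, pow_zero, pow_one]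
      rw [hω.1.eq]
      exact hω.posSemidef.add hω.posSemidef
    · intro i h1 h2
      simp only []
      have e1 : i + 1 - 1 = i := by omega
      rw [e1, hherm, hhalf, hherm, hsq i h1, sub_self]
      exact Matrix.PosSemidef.zero
    · simp only []
      rw [hherm, hsq k hk, sub_self]
      exact Matrix.PosSemidef.zero
  refine ⟨hfeas, ?_⟩
  have hobj : alphaIM k * (ρ * ω).trace.re - (alphaIM k - 1) * (σ * ω ^ (2 ^ k)).trace.re
      = QimObj k ρ σ (fun i => ω ^ (2 ^ (i - 1))) (ω ^ (2 ^ k)) := by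
    rw [QimObj]
    congr 2
    simp only [Nat.sub_self, pow_zero, pow_one]
    rw [hω.1.eq, Matrix.mul_add, Matrix.trace_add, Complex.add_re]
    ring
  rw [hobj, Qim]
  exact le_csSup (qim_bddAbove k hk ρ σ hρ hσ hsupp) ⟨_, _, hfeas, rfl⟩
end

section
/- For every complex d×d density matrix ρ and every positive definite complex d×d matrix σ, the iterated mean quantity with k = 1 (so α₁ = 2) is bounded by the Petz quantity of order 2: Q^{im}_{2}(ρ‖σ) ≤ tr(ρ² σ⁻¹), and consequently D^{im}_{2}(ρ‖σ) ≤ log tr(ρ² σ⁻¹). -/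
open Matrix ComplexOrder

open scoped MatrixOrder

section aux

variable {n : Type*} [Fintype n]

lemma aux_tr_conjT_mul_self_re_nonneg (M : Matrix n n ℂ) : 0 ≤ (Mᴴ * M).trace.re := by
  have h : ∀ i : n, 0 ≤ ((Mᴴ * M) i i).re := by
    intro i
    simp only [Matrix.mul_apply, Matrix.conjTranspose_apply]
    rw [Complex.re_sum]
    exact Finset.sum_nonneg fun j _ => by
      simpa [mul_comm, Complex.normSq_apply] using Complex.normSq_nonneg (M j i)
  calc (0:ℝ) ≤ ∑ i, ((Mᴴ*M) i i).re := Finset.sum_nonneg fun i _ => h i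
    _ = (Mᴴ*M).trace.re := by simp [Matrix.trace, Complex.re_sum, Matrix.diag]

lemma aux_psd_trace_re_nonneg {A : Matrix n n ℂ} (hA : A.PosSemidef) : 0 ≤ A.trace.re := by
  classical
  have hT : (CFC.sqrt A)ᴴ * CFC.sqrt A = A := by
    rw [(CFC.sqrt_nonneg A).posSemidef.1.eq]; exact CFC.sqrt_mul_sqrt_self A hA.nonneg
  rw [← hT]; exact aux_tr_conjT_mul_self_re_nonneg _

lemma aux_psd_mul_trace_re_nonneg [DecidableEq n] {A B : Matrix n n ℂ}
    (hA : A.PosSemidef) (hB : B.PosSemidef) : 0 ≤ (A * B).trace.re := by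
  set T := CFC.sqrt A with hTdef
  have hT : T * T = A := CFC.sqrt_mul_sqrt_self A hA.nonneg
  have hTH : Tᴴ = T := (CFC.sqrt_nonneg A).posSemidef.1
  have h1 : (A * B).trace = (Tᴴ * B * T).trace := by
    rw [hTH, ← hT, Matrix.mul_assoc, trace_mul_comm, Matrix.mul_assoc]
  rw [h1]
  exact aux_psd_trace_re_nonneg (hB.conjTranspose_mul_mul_same T)

lemma aux_smul_one_psd [DecidableEq n] {r : ℝ} (hr : 0 ≤ r) :
    ((r:ℂ) • (1 : Matrix n n ℂ)).PosSemidef := by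
  have h : (r:ℂ) • (1 : Matrix n n ℂ) = Matrix.diagonal (fun _ => (r:ℂ)) := by
    ext i j
    by_cases hij : i = j <;>
      simp [Matrix.one_apply, Matrix.diagonal_apply, hij]
  rw [h]
  exact Matrix.PosSemidef.diagonal fun i => by
    simpa using (Complex.zero_le_real).mpr hr

end aux

/-- `Q^{im}_2(ρ‖σ) ≤ tr(ρ² σ⁻¹)` and `D^{im}_2(ρ‖σ) ≤ log tr(ρ² σ⁻¹)`. -/
theorem stmt_11 (d : ℕ) (ρ σ : Matrix (Fin d) (Fin d) ℂ)
    (hρ : ρ.PosSemidef) (hρtr : ρ.trace = 1) (hσ : σ.PosDef) :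
    Qim 1 ρ σ ≤ (ρ * ρ * σ⁻¹).trace.re ∧
    Dim 1 ρ σ ≤ Real.log ((ρ * ρ * σ⁻¹).trace.re) := by
  have halpha : alphaIM 1 = 2 := by norm_num [alphaIM]
  -- square root of σ
  set T := CFC.sqrt σ with hTdef
  have hT : T * T = σ := CFC.sqrt_mul_sqrt_self σ hσ.posSemidef.nonneg
  have hTH : Tᴴ = T := (CFC.sqrt_nonneg σ).posSemidef.1
  have hdet : IsUnit T.det := by
    have h : T.det * T.det = σ.det := by rw [← det_mul, hT]
    have hσd : σ.det ≠ 0 := hσ.det_pos.ne'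
    exact isUnit_iff_ne_zero.mpr (fun h0 => hσd (by rw [← h, h0, mul_zero]))
  have hTinv : T * T⁻¹ = 1 := mul_nonsing_inv _ hdet
  have hTinv' : T⁻¹ * T = 1 := nonsing_inv_mul _ hdet
  have hinvH : (T⁻¹)ᴴ = T⁻¹ :=
    Matrix.IsHermitian.inv (CFC.sqrt_nonneg σ).posSemidef.1
  have hσinv : T⁻¹ * T⁻¹ = σ⁻¹ := by rw [← hT, Matrix.mul_inv_rev]
  -- the pointwise objective bound
  have key : ∀ V Z : Matrix (Fin d) (Fin d) ℂ, (Z - Vᴴ * V).PosSemidef →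
      (ρ * (V + Vᴴ)).trace.re - (σ * Z).trace.re ≤ (ρ * ρ * σ⁻¹).trace.re := by
    intro V Z hZV
    have e1 : ((V*T)ᴴ*(V*T)).trace = (σ*(Vᴴ*V)).trace := by
      rw [conjTranspose_mul, hTH, trace_mul_comm]
      have h : (V*T)*(T*Vᴴ) = V*σ*Vᴴ := by rw [← hT]; simp only [Matrix.mul_assoc]
      rw [h, trace_mul_cycle, trace_mul_comm]
    have e2 : ((V*T)ᴴ*(ρ*T⁻¹)).trace = (ρ*Vᴴ).trace := by
      rw [conjTranspose_mul, hTH, trace_mul_comm]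
      have h : (ρ*T⁻¹)*(T*Vᴴ) = ρ*Vᴴ := by
        calc (ρ*T⁻¹)*(T*Vᴴ) = ρ*(T⁻¹*T)*Vᴴ := by simp only [Matrix.mul_assoc]
          _ = ρ*Vᴴ := by rw [hTinv', Matrix.mul_one]
      rw [h]
    have e3 : ((ρ*T⁻¹)ᴴ*(V*T)).trace = (ρ*V).trace := by
      rw [conjTranspose_mul, hinvH, hρ.1.eq, trace_mul_comm]
      have h : (V*T)*(T⁻¹*ρ) = V*ρ := by
        calc (V*T)*(T⁻¹*ρ) = V*(T*T⁻¹)*ρ := by simp only [Matrix.mul_assoc]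
          _ = V*ρ := by rw [hTinv, Matrix.mul_one]
      rw [h, trace_mul_comm]
    have e4 : ((ρ*T⁻¹)ᴴ*(ρ*T⁻¹)).trace = (ρ*ρ*σ⁻¹).trace := by
      rw [conjTranspose_mul, hinvH, hρ.1.eq, trace_mul_comm]
      have h : (ρ*T⁻¹)*(T⁻¹*ρ) = ρ*σ⁻¹*ρ := by
        rw [← hσinv]; simp only [Matrix.mul_assoc]
      rw [h, trace_mul_cycle]
    have expand : ((V*T - ρ*T⁻¹)ᴴ*(V*T - ρ*T⁻¹)).trace
        = ((V*T)ᴴ*(V*T)).trace - ((V*T)ᴴ*(ρ*T⁻¹)).trace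
          - ((ρ*T⁻¹)ᴴ*(V*T)).trace + ((ρ*T⁻¹)ᴴ*(ρ*T⁻¹)).trace := by
      rw [conjTranspose_sub, Matrix.sub_mul, Matrix.mul_sub, Matrix.mul_sub,
        trace_sub, trace_sub, trace_sub]
      ring
    have keyC : (ρ*(V+Vᴴ)).trace - (σ*(Vᴴ*V)).trace
        + ((V*T - ρ*T⁻¹)ᴴ*(V*T - ρ*T⁻¹)).trace = (ρ*ρ*σ⁻¹).trace := by
      rw [Matrix.mul_add, trace_add, expand, e1, e2, e3, e4]
      ring
    have hre : (ρ*(V+Vᴴ)).trace.re - (σ*(Vᴴ*V)).trace.re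
        + ((V*T - ρ*T⁻¹)ᴴ*(V*T - ρ*T⁻¹)).trace.re = (ρ*ρ*σ⁻¹).trace.re := by
      have h := congrArg Complex.re keyC
      simpa [Complex.add_re, Complex.sub_re] using h
    have h1 : 0 ≤ ((V*T - ρ*T⁻¹)ᴴ*(V*T - ρ*T⁻¹)).trace.re :=
      aux_tr_conjT_mul_self_re_nonneg _
    have h2 : (σ*(Vᴴ*V)).trace.re ≤ (σ*Z).trace.re := by
      have h3 : 0 ≤ (σ*(Z - Vᴴ*V)).trace.re :=
        aux_psd_mul_trace_re_nonneg hσ.posSemidef hZV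
      have h4 : (σ*(Z - Vᴴ*V)).trace = (σ*Z).trace - (σ*(Vᴴ*V)).trace := by
        rw [Matrix.mul_sub, trace_sub]
      rw [h4, Complex.sub_re] at h3
      linarith
    linarith
  -- upper bound on all elements of the sup set
  have hub : ∀ q ∈ {q : ℝ | ∃ V Z, QimFeasible 1 V Z ∧ q = QimObj 1 ρ σ V Z},
      q ≤ (ρ * ρ * σ⁻¹).trace.re := by
    rintro q ⟨V, Z, ⟨hZ, hV1, _, hZV⟩, rfl⟩
    have h := key (V 1) Z hZV
    simp only [QimObj, halpha]
    linarith
  -- target is nonneg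
  have htarget : 0 ≤ (ρ * ρ * σ⁻¹).trace.re := by
    have hpsd : (ρᴴ * σ⁻¹ * ρ).PosSemidef :=
      (hσ.inv).posSemidef.conjTranspose_mul_mul_same ρ
    have h : (ρ * ρ * σ⁻¹).trace = (ρᴴ * σ⁻¹ * ρ).trace := by
      rw [hρ.1.eq, ← trace_mul_cycle]
    rw [h]
    exact aux_psd_trace_re_nonneg hpsd
  have hQle : Qim 1 ρ σ ≤ (ρ * ρ * σ⁻¹).trace.re := Real.sSup_le hub htarget
  refine ⟨hQle, ?_⟩
  -- positivity of Qim via explicit feasible point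
  have hne : Nonempty (Fin d) := by
    rcases isEmpty_or_nonempty (Fin d) with h | h
    · exfalso
      rw [Matrix.trace] at hρtr
      simp at hρtr
    · exact h
  have hdiag : ∀ i, 0 < (σ i i).re := by
    intro i
    have hx : (Pi.single i 1 : Fin d → ℂ) ≠ 0 := by
      intro h
      have h2 := congrFun h i
      simp at h2
    have h := hσ.re_dotProduct_pos hx
    simpa [dotProduct, Matrix.mulVec, Pi.single_apply, Finset.sum_ite_eq,
      Finset.mul_sum] using h
  have hts : 0 < σ.trace.re := by
    have h : σ.trace.re = ∑ i, (σ i i).re := by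
      simp [Matrix.trace, Complex.re_sum, Matrix.diag]
    rw [h]
    exact Finset.sum_pos (fun i _ => hdiag i) Finset.univ_nonempty
  set t : ℝ := σ.trace.re with htdef
  set c : ℝ := t⁻¹ with hcdef
  have hc : 0 < c := inv_pos.mpr hts
  -- explicit feasible point with objective value c
  have hmem : c ∈ {q : ℝ | ∃ V Z, QimFeasible 1 V Z ∧ q = QimObj 1 ρ σ V Z} := by
    refine ⟨fun _ => (c:ℂ) • 1, ((c:ℂ)^2) • 1, ⟨?_, ?_, ?_, ?_⟩, ?_⟩
    · have : ((c:ℂ)^2) • (1 : Matrix (Fin d) (Fin d) ℂ)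
          = ((c^2 : ℝ):ℂ) • 1 := by push_cast; ring_nf
      rw [this]
      exact aux_smul_one_psd (sq_nonneg c)
    · have h : ((c:ℂ) • (1 : Matrix (Fin d) (Fin d) ℂ)) + ((c:ℂ) • 1)ᴴ
          = ((2*c : ℝ):ℂ) • 1 := by
        rw [conjTranspose_smul, conjTranspose_one]
        push_cast
        simp only [RCLike.star_def, Complex.conj_ofReal]
        module
      rw [h]
      exact aux_smul_one_psd (by linarith)
    · intro i h1 h2; omega
    · have h : ((c:ℂ) • (1 : Matrix (Fin d) (Fin d) ℂ))ᴴ * ((c:ℂ) • 1)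
          = ((c:ℂ)^2) • 1 := by
        rw [conjTranspose_smul, conjTranspose_one, Matrix.smul_mul, Matrix.mul_smul,
          Matrix.one_mul, smul_smul]
        simp only [RCLike.star_def, Complex.conj_ofReal]
        ring_nf
      rw [h, sub_self]
      exact Matrix.PosSemidef.zero
    · simp only [QimObj, halpha]
      have h1 : ((c:ℂ) • (1 : Matrix (Fin d) (Fin d) ℂ)) + ((c:ℂ) • 1)ᴴ
          = ((2*c : ℝ):ℂ) • 1 := by
        rw [conjTranspose_smul, conjTranspose_one]
        push_cast
        simp only [RCLike.star_def, Complex.conj_ofReal]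
        module
      rw [h1]
      have h2 : (ρ * (((2*c : ℝ):ℂ) • (1 : Matrix (Fin d) (Fin d) ℂ))).trace
          = ((2*c : ℝ):ℂ) := by
        rw [Matrix.mul_smul, Matrix.mul_one, trace_smul, hρtr, smul_eq_mul, mul_one]
      have h3 : (σ * (((c:ℂ)^2) • (1 : Matrix (Fin d) (Fin d) ℂ))).trace
          = ((c:ℂ)^2) * σ.trace := by
        rw [Matrix.mul_smul, Matrix.mul_one, trace_smul, smul_eq_mul]
      rw [h2, h3]
      have hσim : σ.trace.im = 0 := by
        have him : ∀ i, (σ i i).im = 0 := by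
          intro i
          have h := congrFun (congrFun hσ.isHermitian.eq i) i
          rw [Matrix.conjTranspose_apply] at h
          exact Complex.conj_eq_iff_im.mp h
        simp [Matrix.trace, Complex.im_sum, Matrix.diag, him]
      have h4 : (((c:ℂ)^2) * σ.trace).re = c^2 * t := by
        have hcast : ((c:ℂ)^2) = ((c^2:ℝ):ℂ) := by push_cast; ring
        rw [hcast, Complex.mul_re, Complex.ofReal_re, Complex.ofReal_im, hσim]
        ring
      rw [h4]
      simp only [Complex.ofReal_re]
      have ht0 : t ≠ 0 := ne_of_gt hts
      have h5 : c^2*t = c := by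
        rw [hcdef, pow_two]
        field_simp
      linarith [h5]
  have hQpos : 0 < Qim 1 ρ σ := by
    have hb : BddAbove {q : ℝ | ∃ V Z, QimFeasible 1 V Z ∧ q = QimObj 1 ρ σ V Z} :=
      ⟨(ρ * ρ * σ⁻¹).trace.re, fun q hq => hub q hq⟩
    exact lt_of_lt_of_le hc (le_csSup hb hmem)
  have hDim : Dim 1 ρ σ = Real.log (Qim 1 ρ σ) := by
    rw [Dim, halpha]
    norm_num
  rw [hDim]
  exact Real.log_le_log hQpos hQle
end
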